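/- Let M be a matroid of rank k+1 on a ground set E of size 2k having a coloop e. Then |Π_{k−1}(M)| = |Π_{k−1}(M∖e)| and |Π_k(M)| = 2|Π_{k−1}(M∖e)|, and consequently |Π_{k−1}(M)| ≤ (k/(k+1))|Π_k(M)|. -/

import Mathlib

open scoped Matroid
/-- `Π_i(M)`: ordered partitions `(A, B)` of the ground set of `M` with `|A| = i` and
both parts independent. -/
def PiParts {α : Type*} (M : Matroid α) (i : ℕ) : Set (Set α × Set α) :=
  {p | p.1 ∪ p.2 = M.E ∧ Disjoint p.1 p.2 ∧ p.1.ncard = i ∧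
    M.Indep p.1 ∧ M.Indep p.2}

private lemma piParts_finite {α : Type*} (M : Matroid α) (i : ℕ) (hfin : M.E.Finite) :
    (PiParts M i).Finite := by
  apply ((hfin.finite_subsets).prod (hfin.finite_subsets)).subset
  rintro ⟨A, B⟩ ⟨hu, -, -, -, -⟩
  exact ⟨fun x hx => hu ▸ Or.inl hx, fun x hx => hu ▸ Or.inr hx⟩

private lemma base_of_indep_card {α : Type*} {M : Matroid α} {k : ℕ} {I : Set α}
    (hrank : ∃ B, M.IsBase B ∧ B.ncard = k + 1) (hfin : M.E.Finite)
    (hI : M.Indep I) (hcard : I.ncard = k + 1) : M.IsBase I := by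
  obtain ⟨B0, hB0, hB0c⟩ := hrank
  obtain ⟨B, hB, hIB⟩ := hI.exists_isBase_superset
  have hBfin : B.Finite := hfin.subset hB.subset_ground
  have hBc : B.ncard = k + 1 := (hB.ncard_eq_ncard_of_isBase hB0).trans hB0c
  have hIBeq : I = B := Set.eq_of_subset_of_ncard_le hIB (by omega) hBfin
  exact hIBeq ▸ hB

private lemma insert_coloop_indep {α : Type*} {M : Matroid α} {e : α} {I : Set α}
    (hco : ∀ B, M.IsBase B → e ∈ B) (hI : M.Indep I) : M.Indep (insert e I) := by
  obtain ⟨B, hB, hIB⟩ := hI.exists_isBase_superset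
  exact hB.indep.subset (Set.insert_subset (hco B hB) hIB)

private lemma disj_insert {α : Type*} {s t : Set α} {a : α} (ha : a ∉ s)
    (h : Disjoint s t) : Disjoint s (insert a t) := by
  rw [Set.disjoint_right]
  rintro x (rfl | hx)
  · exact ha
  · exact Set.disjoint_right.mp h hx

theorem coloop_partition_count {α : Type*} (M : Matroid α) (k : ℕ) (hk : 0 < k)
    (e : α) (hfin : M.E.Finite) (hE : M.E.ncard = 2 * k)
    (hrank : ∃ B, M.IsBase B ∧ B.ncard = k + 1)
    (hcoloop : e ∈ M.E ∧ ∀ B, M.IsBase B → e ∈ B) :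
    (PiParts M (k - 1)).ncard = (PiParts (M ↾ (M.E \ {e})) (k - 1)).ncard ∧
    (PiParts M k).ncard = 2 * (PiParts (M ↾ (M.E \ {e})) (k - 1)).ncard ∧
    (k + 1) * (PiParts M (k - 1)).ncard ≤ k * (PiParts M k).ncard := by
  obtain ⟨heE, hco⟩ := hcoloop
  set M' := M ↾ (M.E \ {e}) with hM'
  set N := PiParts M' (k - 1) with hN
  have hE'fin : (M.E \ {e}).Finite := hfin.subset Set.diff_subset
  have hE'card : (M.E \ {e}).ncard = 2 * k - 1 := by
    rw [Set.ncard_diff_singleton_of_mem heE, hE]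
  have hNfin : N.Finite := by
    have := piParts_finite M' (k - 1) (by simpa [hM'] using hE'fin)
    exact this
  -- characterization of membership in N
  have hNmem : ∀ X Y : Set α, (X, Y) ∈ N ↔
      X ∪ Y = M.E \ {e} ∧ Disjoint X Y ∧ X.ncard = k - 1 ∧
      (M.Indep X ∧ X ⊆ M.E \ {e}) ∧ (M.Indep Y ∧ Y ⊆ M.E \ {e}) := by
    intro X Y
    simp [hN, PiParts, hM', Matroid.restrict_indep_iff]
  -- Claim 1 : PiParts M (k-1) is the image of N under (X, Y) ↦ (X, insert e Y)
  have himg1 : PiParts M (k - 1) = (fun p : Set α × Set α => (p.1, insert e p.2)) '' N := by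
    ext ⟨A, B⟩
    constructor
    · rintro ⟨hu, hd, hc, hA, hB⟩
      simp only [Set.mem_setOf_eq] at hu hd hc hA hB ⊢
      have hAE : A ⊆ M.E := hu ▸ Set.subset_union_left
      have hBE : B ⊆ M.E := hu ▸ Set.subset_union_right
      have hAfin : A.Finite := hfin.subset hAE
      have hBeq : B = M.E \ A := by
        rw [← hu, Set.union_diff_cancel_left (Set.disjoint_iff.mp hd)]
      have hBc : B.ncard = k + 1 := by
        rw [hBeq, Set.ncard_diff hAE hAfin, hE, hc]; omega
      have hBbase : M.IsBase B := base_of_indep_card hrank hfin hB hBc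
      have heB : e ∈ B := hco B hBbase
      have heA : e ∉ A := fun h => Set.disjoint_left.mp hd h heB
      refine ⟨(A, B \ {e}), (hNmem A (B \ {e})).mpr ⟨?_, hd.mono_right Set.diff_subset, hc,
        ⟨hA, Set.subset_diff_singleton hAE heA⟩,
        ⟨hB.subset Set.diff_subset, Set.diff_subset_diff_left hBE⟩⟩, ?_⟩
      · rw [show A ∪ (B \ {e}) = (A ∪ B) \ {e} by
          rw [Set.union_diff_distrib, Set.diff_singleton_eq_self heA], hu]
      · simp [Set.insert_diff_singleton, Set.insert_eq_self.mpr heB]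
    · rintro ⟨⟨X, Y⟩, hmem, heq⟩
      obtain ⟨hu, hd, hc, ⟨hXi, hXs⟩, ⟨hYi, hYs⟩⟩ := (hNmem X Y).mp hmem
      rw [← heq]
      have heX : e ∉ X := fun h => (hXs h).2 rfl
      have heY : e ∉ Y := fun h => (hYs h).2 rfl
      refine ⟨?_, ?_, hc, hXi, insert_coloop_indep hco hYi⟩
      · show X ∪ insert e Y = M.E
        rw [Set.union_insert, hu, Set.insert_diff_singleton, Set.insert_eq_self.mpr heE]
      · exact disj_insert heX hd
  have h1 : (PiParts M (k - 1)).ncard = N.ncard := by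
    rw [himg1]
    apply Set.ncard_image_of_injOn
    rintro ⟨X₁, Y₁⟩ h₁ ⟨X₂, Y₂⟩ h₂ h
    obtain ⟨hu₁, -, -, -, ⟨-, hYs₁⟩⟩ := (hNmem X₁ Y₁).mp h₁
    obtain ⟨hu₂, -, -, -, ⟨-, hYs₂⟩⟩ := (hNmem X₂ Y₂).mp h₂
    have heY₁ : e ∉ Y₁ := fun h => (hYs₁ h).2 rfl
    have heY₂ : e ∉ Y₂ := fun h => (hYs₂ h).2 rfl
    have h1' : X₁ = X₂ := congrArg Prod.fst h
    have h2' : insert e Y₁ = insert e Y₂ := congrArg Prod.snd h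
    have : Y₁ = Y₂ := by
      rw [← Set.insert_diff_self_of_notMem heY₁, h2', Set.insert_diff_self_of_notMem heY₂]
    simp [h1', this]
  -- Claim 2
  set S1 := (fun p : Set α × Set α => (insert e p.1, p.2)) '' N with hS1
  set S2 := (fun p : Set α × Set α => (p.2, insert e p.1)) '' N with hS2
  have himg2 : PiParts M k = S1 ∪ S2 := by
    ext ⟨A, B⟩
    constructor
    · rintro ⟨hu, hd, hc, hA, hB⟩
      simp only [Set.mem_setOf_eq] at hu hd hc hA hB
      have hAE : A ⊆ M.E := hu ▸ Set.subset_union_left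
      have hBE : B ⊆ M.E := hu ▸ Set.subset_union_right
      have hAfin : A.Finite := hfin.subset hAE
      have hBfin : B.Finite := hfin.subset hBE
      have hBeq : B = M.E \ A := by
        rw [← hu, Set.union_diff_cancel_left (Set.disjoint_iff.mp hd)]
      have hBc : B.ncard = k := by
        rw [hBeq, Set.ncard_diff hAE hAfin, hE, hc]; omega
      have he : e ∈ A ∪ B := hu.symm ▸ heE
      rcases he with heA | heB
      · have heB : e ∉ B := fun h => Set.disjoint_left.mp hd heA h
        refine Or.inl ⟨(A \ {e}, B), (hNmem (A \ {e}) B).mpr ⟨?_, (hd.mono_left Set.diff_subset), ?_,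
          ⟨hA.subset Set.diff_subset, Set.diff_subset_diff_left hAE⟩,
          ⟨hB, Set.subset_diff_singleton hBE heB⟩⟩, ?_⟩
        · rw [show (A \ {e}) ∪ B = (A ∪ B) \ {e} by
            rw [Set.union_diff_distrib, Set.diff_singleton_eq_self heB], hu]
        · rw [Set.ncard_diff_singleton_of_mem heA, hc]
        · simp [Set.insert_diff_singleton, Set.insert_eq_self.mpr heA]
      · have heA : e ∉ A := fun h => Set.disjoint_left.mp hd h heB
        refine Or.inr ⟨(B \ {e}, A), (hNmem (B \ {e}) A).mpr ⟨?_, (hd.symm.mono_left Set.diff_subset), ?_,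
          ⟨hB.subset Set.diff_subset, Set.diff_subset_diff_left hBE⟩,
          ⟨hA, Set.subset_diff_singleton hAE heA⟩⟩, ?_⟩
        · rw [show (B \ {e}) ∪ A = (A ∪ B) \ {e} by
            rw [Set.union_diff_distrib, Set.diff_singleton_eq_self heA, Set.union_comm], hu]
        · rw [Set.ncard_diff_singleton_of_mem heB, hBc]
        · simp [Set.insert_diff_singleton, Set.insert_eq_self.mpr heB]
    · have mem1 : ∀ X Y : Set α, (X, Y) ∈ N → (insert e X, Y) ∈ PiParts M k := by
        intro X Y hmem
        obtain ⟨hu, hd, hc, ⟨hXi, hXs⟩, ⟨hYi, hYs⟩⟩ := (hNmem X Y).mp hmem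
        have heX : e ∉ X := fun h => (hXs h).2 rfl
        have heY : e ∉ Y := fun h => (hYs h).2 rfl
        have hXfin : X.Finite := hE'fin.subset hXs
        refine ⟨?_, (disj_insert heY hd.symm).symm, ?_,
          insert_coloop_indep hco hXi, hYi⟩
        · show insert e X ∪ Y = M.E
          rw [Set.insert_union, hu, Set.insert_diff_singleton, Set.insert_eq_self.mpr heE]
        · rw [Set.ncard_insert_of_notMem heX hXfin, hc]; omega
      have mem2 : ∀ X Y : Set α, (X, Y) ∈ N → (Y, insert e X) ∈ PiParts M k := by
        intro X Y hmem
        obtain ⟨hu, hd, hc, ⟨hXi, hXs⟩, ⟨hYi, hYs⟩⟩ := (hNmem X Y).mp hmem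
        have heX : e ∉ X := fun h => (hXs h).2 rfl
        have heY : e ∉ Y := fun h => (hYs h).2 rfl
        have hXfin : X.Finite := hE'fin.subset hXs
        have hYcard : Y.ncard = k := by
          have hYeq : Y = (M.E \ {e}) \ X := by
            rw [← hu, Set.union_diff_cancel_left (Set.disjoint_iff.mp hd)]
          rw [hYeq, Set.ncard_diff hXs hXfin, hE'card, hc]; omega
        refine ⟨?_, disj_insert heY hd.symm, hYcard,
          hYi, insert_coloop_indep hco hXi⟩
        show Y ∪ insert e X = M.E
        rw [Set.union_insert, Set.union_comm, hu, Set.insert_diff_singleton,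
          Set.insert_eq_self.mpr heE]
      rintro (⟨⟨X, Y⟩, hmem, heq⟩ | ⟨⟨X, Y⟩, hmem, heq⟩)
      · rw [← heq]; exact mem1 X Y hmem
      · rw [← heq]; exact mem2 X Y hmem
  have hS1card : S1.ncard = N.ncard := by
    apply Set.ncard_image_of_injOn
    rintro ⟨X₁, Y₁⟩ h₁ ⟨X₂, Y₂⟩ h₂ h
    obtain ⟨hu₁, -, -, ⟨-, hXs₁⟩, -⟩ := (hNmem X₁ Y₁).mp h₁
    obtain ⟨hu₂, -, -, ⟨-, hXs₂⟩, -⟩ := (hNmem X₂ Y₂).mp h₂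
    have heX₁ : e ∉ X₁ := fun h => (hXs₁ h).2 rfl
    have heX₂ : e ∉ X₂ := fun h => (hXs₂ h).2 rfl
    have h1' : insert e X₁ = insert e X₂ := congrArg Prod.fst h
    have h2' : Y₁ = Y₂ := congrArg Prod.snd h
    have : X₁ = X₂ := by
      rw [← Set.insert_diff_self_of_notMem heX₁, h1', Set.insert_diff_self_of_notMem heX₂]
    simp [h2', this]
  have hS2card : S2.ncard = N.ncard := by
    apply Set.ncard_image_of_injOn
    rintro ⟨X₁, Y₁⟩ h₁ ⟨X₂, Y₂⟩ h₂ h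
    obtain ⟨hu₁, -, -, ⟨-, hXs₁⟩, -⟩ := (hNmem X₁ Y₁).mp h₁
    obtain ⟨hu₂, -, -, ⟨-, hXs₂⟩, -⟩ := (hNmem X₂ Y₂).mp h₂
    have heX₁ : e ∉ X₁ := fun h => (hXs₁ h).2 rfl
    have heX₂ : e ∉ X₂ := fun h => (hXs₂ h).2 rfl
    have h1' : Y₁ = Y₂ := congrArg Prod.fst h
    have h2' : insert e X₁ = insert e X₂ := congrArg Prod.snd h
    have : X₁ = X₂ := by
      rw [← Set.insert_diff_self_of_notMem heX₁, h2', Set.insert_diff_self_of_notMem heX₂]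
    simp [h1', this]
  have hdisjS : Disjoint S1 S2 := by
    rw [Set.disjoint_left]
    rintro ⟨A, B⟩ ⟨⟨X₁, Y₁⟩, h₁, hp₁⟩ ⟨⟨X₂, Y₂⟩, h₂, hp₂⟩
    obtain ⟨-, -, -, -, ⟨-, hYs₂⟩⟩ := (hNmem X₂ Y₂).mp h₂
    have heA : e ∈ A := by
      have := congrArg Prod.fst hp₁; simp at this; rw [← this]; exact Set.mem_insert _ _
    have heA' : e ∉ A := by
      have := congrArg Prod.fst hp₂; simp at this; rw [← this]
      exact fun h => (hYs₂ h).2 rfl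
    exact heA' heA
  have h2 : (PiParts M k).ncard = 2 * N.ncard := by
    rw [himg2, Set.ncard_union_eq hdisjS (hNfin.image _) (hNfin.image _), hS1card, hS2card]
    ring
  refine ⟨h1, h2, ?_⟩
  rw [h1, h2]
  calc (k + 1) * N.ncard ≤ (2 * k) * N.ncard := Nat.mul_le_mul_right _ (by omega)
    _ = k * (2 * N.ncard) := by ring
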